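/- The endomorphism algebra End_{Δ_n}(U_{[n]}) has complex dimension n². -/

import Mathlib

open Matrix

/-- The nilpotent shift matrix `s₁` sending the basis vector `v_j` to `v_{j+1}` for
`j < n` and `v_n` to `0` (indices `0, ..., n-1` in `Fin n`). -/
noncomputable def shiftMatrix (n : ℕ) : Matrix (Fin n) (Fin n) ℂ :=
  Matrix.of fun r c => if (r : ℕ) = (c : ℕ) + 1 then 1 else 0

/-- The endomorphism algebra `End_{Δ_n}(U_{[n]})`: tuples `(E_i)_{i ∈ ℤ_n}` of `n × n`
complex matrices with `E_{i+1} s₁ = s₁ E_i` for all `i`, as a `ℂ`-subspace of the space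
of all matrix tuples. -/
noncomputable def cyclicEnd (n : ℕ) : Submodule ℂ (ZMod n → Matrix (Fin n) (Fin n) ℂ) where
  carrier := {E | ∀ i, E (i + 1) * shiftMatrix n = shiftMatrix n * E i}
  add_mem' := by
    intro E F hE hF i
    simp only [Pi.add_apply, Matrix.add_mul, Matrix.mul_add, hE i, hF i]
  zero_mem' := by
    intro i
    simp
  smul_mem' := by
    intro c E hE i
    simp only [Pi.smul_apply, Matrix.smul_mul, Matrix.mul_smul, hE i]

lemma mul_shift (n : ℕ) (A : Matrix (Fin n) (Fin n) ℂ) (r c : Fin n) :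
    (A * shiftMatrix n) r c = if h : (c:ℕ)+1 < n then A r ⟨(c:ℕ)+1, h⟩ else 0 := by
  rw [Matrix.mul_apply]
  split
  · next h =>
    rw [Finset.sum_eq_single (⟨(c:ℕ)+1, h⟩ : Fin n)]
    · simp [shiftMatrix]
    · intro k _ hk
      simp only [shiftMatrix, Matrix.of_apply]
      rw [if_neg, mul_zero]
      intro hkc; exact hk (Fin.ext hkc)
    · simp
  · next h =>
    apply Finset.sum_eq_zero
    intro k _
    simp only [shiftMatrix, Matrix.of_apply]
    rw [if_neg, mul_zero]
    intro hkc; exact h (hkc ▸ k.2)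

lemma shift_mul (n : ℕ) (A : Matrix (Fin n) (Fin n) ℂ) (r c : Fin n) :
    (shiftMatrix n * A) r c = if 0 < (r:ℕ) then A ⟨(r:ℕ)-1, lt_of_le_of_lt (Nat.sub_le _ _) r.2⟩ c else 0 := by
  rw [Matrix.mul_apply]
  split
  · next h =>
    rw [Finset.sum_eq_single (⟨(r:ℕ)-1, lt_of_le_of_lt (Nat.sub_le _ _) r.2⟩ : Fin n)]
    · simp only [shiftMatrix, Matrix.of_apply]
      rw [if_pos (by omega), one_mul]
    · intro k _ hk
      simp only [shiftMatrix, Matrix.of_apply]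
      rw [if_neg, zero_mul]
      intro hkc
      exact hk (Fin.ext (show (k:ℕ) = (r:ℕ)-1 by omega))
    · simp
  · next h =>
    apply Finset.sum_eq_zero
    intro k _
    simp only [shiftMatrix, Matrix.of_apply]
    rw [if_neg, zero_mul]
    omega

lemma key_formula (n : ℕ) (hn : 0 < n) (E : ZMod n → Matrix (Fin n) (Fin n) ℂ)
    (hE : ∀ i, E (i + 1) * shiftMatrix n = shiftMatrix n * E i) :
    ∀ (c : ℕ) (hc : c < n) (j : ZMod n) (r : Fin n),
      E j r ⟨c, hc⟩ =
        if c ≤ (r:ℕ) then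
          E (j - (c:ℕ)) ⟨(r:ℕ) - c, lt_of_le_of_lt (Nat.sub_le _ _) r.2⟩ ⟨0, hn⟩
        else 0 := by
  intro c
  induction c with
  | zero =>
    intro hc j r
    rw [if_pos (Nat.zero_le _)]
    simp only [Nat.cast_zero, sub_zero, Nat.sub_zero]
  | succ c ih =>
    intro hc j r
    have h1 := congrFun (congrFun (hE (j - 1)) r) ⟨c, by omega⟩
    rw [mul_shift, shift_mul] at h1
    rw [dif_pos hc] at h1
    have hj : j - 1 + 1 = j := by ring
    rw [hj] at h1
    rw [h1]
    by_cases hr : 0 < (r:ℕ)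
    · rw [if_pos hr]
      rw [ih (by omega) (j-1) ⟨(r:ℕ)-1, _⟩]
      by_cases hcr : c + 1 ≤ (r:ℕ)
      · rw [if_pos (show c ≤ (r:ℕ)-1 by omega), if_pos hcr]
        congr 1
        · push_cast; ring
        · exact Fin.ext (by simp; omega)
      · rw [if_neg (by simp; omega), if_neg hcr]
    · rw [if_neg hr, if_neg (by omega)]

/-- The endomorphism algebra `End_{Δ_n}(U_{[n]})` has complex dimension `n²`. -/
theorem finrank_cyclicEnd (n : ℕ) (hn : 0 < n) :
    Module.finrank ℂ (cyclicEnd n) = n ^ 2 := by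
  have hNZ : NeZero n := ⟨hn.ne'⟩
  let π : cyclicEnd n →ₗ[ℂ] (ZMod n → Fin n → ℂ) :=
    { toFun := fun E j r => (E : ZMod n → Matrix (Fin n) (Fin n) ℂ) j r ⟨0, hn⟩
      map_add' := by intros; rfl
      map_smul' := by intros; rfl }
  have hbij : Function.Bijective π := by
    constructor
    · rw [injective_iff_map_eq_zero]
      intro E hE0
      ext j r c
      have hc2 := c.2
      have hkey := key_formula n hn E.1 E.2 (c : ℕ) c.2 j r
      rw [Fin.eta] at hkey
      rw [hkey]
      split
      · exact congrFun (congrFun hE0 _) _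
      · rfl
    · intro f
      refine ⟨⟨fun i => Matrix.of fun r c =>
        if h : (c:ℕ) ≤ (r:ℕ) then
          f (i - (c:ℕ)) ⟨(r:ℕ) - (c:ℕ), lt_of_le_of_lt (Nat.sub_le _ _) r.2⟩
        else 0, ?_⟩, ?_⟩
      · intro i
        ext r c
        rw [mul_shift, shift_mul]
        by_cases h1 : (c:ℕ) + 1 < n
        · rw [dif_pos h1]
          simp only [Matrix.of_apply]
          by_cases hr : 0 < (r:ℕ)
          · rw [if_pos hr]
            by_cases h2 : (c:ℕ) + 1 ≤ (r:ℕ)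
            · rw [dif_pos h2, dif_pos (show (c:ℕ) ≤ (r:ℕ) - 1 by omega)]
              congr 1
              · push_cast; ring
              · exact Fin.ext (by simp; omega)
            · rw [dif_neg h2, dif_neg (by simp; omega)]
          · rw [if_neg hr, dif_neg (by omega)]
        · rw [dif_neg h1]
          by_cases hr : 0 < (r:ℕ)
          · rw [if_pos hr]
            simp only [Matrix.of_apply]
            rw [dif_neg]
            omega
          · rw [if_neg hr]
      · funext j r
        change (if h : (0:ℕ) ≤ (r:ℕ) then f (j - ((0:ℕ) : ZMod n)) ⟨(r:ℕ) - 0, lt_of_le_of_lt (Nat.sub_le _ _) r.2⟩ else 0) = f j r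
        rw [dif_pos (Nat.zero_le _)]
        simp only [Nat.cast_zero, sub_zero, Nat.sub_zero, Fin.eta]
  rw [LinearEquiv.finrank_eq (LinearEquiv.ofBijective π hbij)]
  simp [Module.finrank_pi_fintype, ZMod.card, pow_two]
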